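/- arXiv:2304.07347 — 4 statements merged into one kernel-verified Lean document; each statement's English description precedes it below -/
import Mathlib

section
/- Let A be an invertible n×n real matrix and let X and Y be n×n real symmetric positive definite matrices. Then for every t ∈ [0,1], (A X Aᵀ) *_t (A Y Aᵀ) = A (X *_t Y) Aᵀ. -/
open Matrix Filter Topology
open scoped Classical

noncomputable section

/-- Square real matrices. -/
abbrev Mat (n : ℕ) := Matrix (Fin n) (Fin n) ℝ

/-- The largest element of the real spectrum of a matrix. -/
noncomputable def lamMax {n : ℕ} (A : Mat n) : ℝ := sSup (spectrum ℝ A)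

/-- The smallest element of the real spectrum of a matrix. -/
noncomputable def lamMin {n : ℕ} (A : Mat n) : ℝ := sInf (spectrum ℝ A)

/-- The positive semidefinite square root (junk value `0` if not PSD). -/
noncomputable def sqrtM {n : ℕ} (X : Mat n) : Mat n :=
  if h : X.PosSemidef then
    (h.1.eigenvectorUnitary : Mat n) * Matrix.diagonal (fun i => Real.sqrt (h.1.eigenvalues i)) *
      (star (h.1.eigenvectorUnitary : Mat n))
  else 0

/-- `X^{-1/2}` for a positive definite matrix. -/
noncomputable def invSqrt {n : ℕ} (X : Mat n) : Mat n := (sqrtM X)⁻¹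

/-- `λ_max(X^{-1/2} Y X^{-1/2})`, the largest generalized eigenvalue of the pair `(Y, X)`. -/
noncomputable def gmax {n : ℕ} (X Y : Mat n) : ℝ := lamMax (invSqrt X * Y * invSqrt X)

/-- `λ_min(X^{-1/2} Y X^{-1/2})`, the smallest generalized eigenvalue of the pair `(Y, X)`. -/
noncomputable def gmin {n : ℕ} (X Y : Mat n) : ℝ := lamMin (invSqrt X * Y * invSqrt X)

/-- The Thompson geodesic `X *_t Y`. -/
noncomputable def thompson {n : ℕ} (X Y : Mat n) (t : ℝ) : Mat n :=
  if gmin X Y = gmax X Y then (gmin X Y) ^ t • X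
  else ((gmax X Y ^ t - gmin X Y ^ t) / (gmax X Y - gmin X Y)) • Y +
    ((gmax X Y * gmin X Y ^ t - gmin X Y * gmax X Y ^ t) / (gmax X Y - gmin X Y)) • X

/-- The Thompson part metric on positive definite matrices. -/
noncomputable def dT {n : ℕ} (X Y : Mat n) : ℝ :=
  max (Real.log (gmax X Y)) (Real.log (gmax Y X))

/-- Hilbert's projective metric on positive definite matrices. -/
noncomputable def dH {n : ℕ} (X Y : Mat n) : ℝ :=
  Real.log (gmax X Y / gmin X Y)

/-- The coefficient `m(X,Y) = dφ/dt(0)` of the Thompson geodesic. -/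
noncomputable def mCoef {n : ℕ} (X Y : Mat n) : ℝ :=
  if gmax X Y = gmin X Y then 1 / gmin X Y
  else (Real.log (gmax X Y) - Real.log (gmin X Y)) / (gmax X Y - gmin X Y)

/-- The coefficient `o(X,Y) = dψ/dt(0)` of the Thompson geodesic. -/
noncomputable def oCoef {n : ℕ} (X Y : Mat n) : ℝ :=
  if gmax X Y = gmin X Y then Real.log (gmin X Y) - 1
  else (gmax X Y * Real.log (gmin X Y) - gmin X Y * Real.log (gmax X Y)) /
    (gmax X Y - gmin X Y)

/-- The mean equation `∑ⱼ m(X*,Yⱼ)·Yⱼ + (∑ⱼ o(X*,Yⱼ))·X* = 0`. -/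
def MeanEq {n k : ℕ} (Y : Fin k → Mat n) (Xs : Mat n) : Prop :=
  ∑ j, mCoef Xs (Y j) • Y j + (∑ j, oCoef Xs (Y j)) • Xs = 0

/-- The Frobenius norm of a matrix. -/
noncomputable def frob {n : ℕ} (A : Mat n) : ℝ :=
  Real.sqrt (∑ i, ∑ j, (A i j) ^ 2)

/-- The inductive sequence of Algorithm 4.1: `indSeq hk Y X₁ i = X_{i+1}`, so that
`indSeq hk Y X₁ 0 = X₁` and `X_{i+1} = X_i *_{1/(i+1)} Y_j` with `j ≡ i (mod k)`,
`1 ≤ j ≤ k`. -/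
noncomputable def indSeq {n k : ℕ} (hk : 0 < k) (Y : Fin k → Mat n) (X₁ : Mat n) :
    ℕ → Mat n
  | 0 => X₁
  | (i + 1) => thompson (indSeq hk Y X₁ i) (Y ⟨i % k, Nat.mod_lt i hk⟩)
      (1 / ((i : ℝ) + 2))

/-- The map `T_p(X) = (⋯((X *_{1/(pk+2)} Y₁) *_{1/(pk+3)} Y₂)⋯) *_{1/((p+1)k+1)} Y_k`. -/
noncomputable def Tmap {n k : ℕ} (Y : Fin k → Mat n) (p : ℕ) (X : Mat n) : Mat n :=
  (List.finRange k).foldl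
    (fun Z j => thompson Z (Y j) (1 / ((p : ℝ) * (k : ℝ) + ((j : ℕ) : ℝ) + 2))) X

/-- The spectral `t`-th power of a symmetric matrix (junk value `0` otherwise). -/
noncomputable def spdPow {n : ℕ} (A : Mat n) (t : ℝ) : Mat n :=
  if h : A.IsHermitian then
    (h.eigenvectorUnitary : Mat n) * Matrix.diagonal (fun i => h.eigenvalues i ^ t) *
      (star (h.eigenvectorUnitary : Mat n))
  else 0

/-- The affine-invariant Riemannian geodesic `X #_t Y = X^{1/2} (X^{-1/2} Y X^{-1/2})^t X^{1/2}`. -/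
noncomputable def riemann {n : ℕ} (X Y : Mat n) (t : ℝ) : Mat n :=
  sqrtM X * spdPow (invSqrt X * Y * invSqrt X) t * sqrtM X

section Aux

variable {n : ℕ}

lemma sqrtM_mul_self {X : Mat n} (hX : X.PosDef) : sqrtM X * sqrtM X = X := by
  rw [sqrtM, dif_pos hX.posSemidef]
  have hU : star (hX.posSemidef.1.eigenvectorUnitary : Mat n) *
      (hX.posSemidef.1.eigenvectorUnitary : Mat n) = 1 := Unitary.coe_star_mul_self _
  conv_rhs => rw [hX.posSemidef.1.spectral_theorem, Unitary.conjStarAlgAut_apply]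
  simp only [Matrix.mul_assoc]
  rw [← Matrix.mul_assoc (star _) _ (Matrix.diagonal _ * _), hU, Matrix.one_mul,
    ← Matrix.mul_assoc (Matrix.diagonal _) (Matrix.diagonal _), Matrix.diagonal_mul_diagonal]
  congr 3
  funext i
  simp [Real.mul_self_sqrt (hX.posSemidef.eigenvalues_nonneg i)]

lemma isUnit_sqrtM {X : Mat n} (hX : X.PosDef) : IsUnit (sqrtM X) := by
  rw [Matrix.isUnit_iff_isUnit_det]
  have h : (sqrtM X).det * (sqrtM X).det = X.det := by
    rw [← Matrix.det_mul, sqrtM_mul_self hX]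
  have := hX.det_pos
  refine isUnit_iff_ne_zero.2 fun h0 => ?_
  rw [h0, mul_zero] at h
  linarith [h ▸ this]

lemma isUnit_invSqrt {X : Mat n} (hX : X.PosDef) : IsUnit (invSqrt X) := by
  rw [invSqrt, Matrix.isUnit_nonsing_inv_iff]; exact isUnit_sqrtM hX

lemma invSqrt_mul_invSqrt {X : Mat n} (hX : X.PosDef) : invSqrt X * invSqrt X = X⁻¹ := by
  rw [invSqrt, ← Matrix.mul_inv_rev, sqrtM_mul_self hX]

lemma spectrum_mul_comm {a b : Mat n} (ha : IsUnit a) :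
    spectrum ℝ (a * b) = spectrum ℝ (b * a) := by
  have hd := (Matrix.isUnit_iff_isUnit_det a).1 ha
  have h : a * b = ↑ha.unit * (b * a) * ↑ha.unit⁻¹ := by
    rw [Matrix.coe_units_inv, IsUnit.unit_spec, Matrix.mul_assoc, Matrix.mul_assoc,
      Matrix.mul_nonsing_inv a hd, Matrix.mul_one]
  rw [h, spectrum.units_conjugate]

lemma spectrum_invSqrt_eq {X Y : Mat n} (hX : X.PosDef) :
    spectrum ℝ (invSqrt X * Y * invSqrt X) = spectrum ℝ (Y * X⁻¹) := by
  rw [Matrix.mul_assoc, spectrum_mul_comm (isUnit_invSqrt hX), Matrix.mul_assoc,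
    invSqrt_mul_invSqrt hX]

lemma posDef_congr {A X : Mat n} (hA : IsUnit A) (hX : X.PosDef) :
    (A * X * Aᵀ).PosDef := by
  have hAT : Aᵀ = Aᴴ := by
    ext i j; simp [Matrix.conjTranspose_apply]
  refine Matrix.PosDef.of_dotProduct_mulVec_pos ?_ ?_
  · rw [hAT]
    exact Matrix.isHermitian_mul_mul_conjTranspose A hX.isHermitian
  · intro x hx
    have hxA : Aᵀ *ᵥ x ≠ 0 := by
      intro h0
      apply hx
      have hTu : IsUnit Aᵀ := by
        rw [Matrix.isUnit_iff_isUnit_det, Matrix.det_transpose,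
          ← Matrix.isUnit_iff_isUnit_det]; exact hA
      have := congrArg (fun v => (Aᵀ)⁻¹ *ᵥ v) h0
      simpa [Matrix.mulVec_mulVec, Matrix.nonsing_inv_mul _
        ((Matrix.isUnit_iff_isUnit_det _).1 hTu)] using this
    have := hX.dotProduct_mulVec_pos hxA
    convert this using 1
    rw [← Matrix.mulVec_mulVec, ← Matrix.mulVec_mulVec, Matrix.dotProduct_mulVec, hAT,
      Matrix.star_mulVec, Matrix.conjTranspose_conjTranspose]

lemma spectrum_congr {A X Y : Mat n} (hA : IsUnit A) (hX : X.PosDef) :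
    spectrum ℝ (invSqrt (A * X * Aᵀ) * (A * Y * Aᵀ) * invSqrt (A * X * Aᵀ))
      = spectrum ℝ (invSqrt X * Y * invSqrt X) := by
  have hdA : IsUnit A.det := (Matrix.isUnit_iff_isUnit_det A).1 hA
  have hdAT : IsUnit Aᵀ.det := by rwa [Matrix.det_transpose]
  rw [spectrum_invSqrt_eq (posDef_congr hA hX), spectrum_invSqrt_eq hX]
  have key : A * Y * Aᵀ * (A * X * Aᵀ)⁻¹ = ↑hA.unit * (Y * X⁻¹) * ↑hA.unit⁻¹ := by
    rw [Matrix.mul_inv_rev, Matrix.mul_inv_rev, Matrix.coe_units_inv, IsUnit.unit_spec]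
    simp only [Matrix.mul_assoc]
    rw [← Matrix.mul_assoc Aᵀ Aᵀ⁻¹, Matrix.mul_nonsing_inv _ hdAT, Matrix.one_mul]
  rw [key, spectrum.units_conjugate]

lemma gmax_congr {A X Y : Mat n} (hA : IsUnit A) (hX : X.PosDef) :
    gmax (A * X * Aᵀ) (A * Y * Aᵀ) = gmax X Y := by
  unfold gmax lamMax; rw [spectrum_congr hA hX]

lemma gmin_congr {A X Y : Mat n} (hA : IsUnit A) (hX : X.PosDef) :
    gmin (A * X * Aᵀ) (A * Y * Aᵀ) = gmin X Y := by
  unfold gmin lamMin; rw [spectrum_congr hA hX]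

end Aux

/-- affine invariance of the Thompson geodesic. -/
theorem thompson_affine_invariant {n : ℕ} (A X Y : Mat n) (hA : IsUnit A)
    (hX : X.PosDef) (hY : Y.PosDef) (t : ℝ) (ht : t ∈ Set.Icc (0 : ℝ) 1) :
    thompson (A * X * Aᵀ) (A * Y * Aᵀ) t = A * thompson X Y t * Aᵀ := by
  rw [thompson, thompson, gmax_congr hA hX, gmin_congr hA hX]
  split_ifs with h
  · simp [Matrix.smul_mul, Matrix.mul_smul]
  · simp [Matrix.mul_add, Matrix.add_mul, Matrix.mul_smul, Matrix.smul_mul]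
end
end

section
/- Let X and Y be 2×2 real symmetric positive definite matrices. Then for every t ∈ [0,1], the affine-invariant Riemannian geodesic and the Thompson geodesic coincide: X #_t Y = X *_t Y. -/
open Matrix Filter Topology
open scoped Classical

noncomputable section

/-- Conjugating an affine function of a diagonal matrix by a matrix `U` with
`U * star U = 1`. -/
lemma unitary_conj_diag_affine {n : ℕ} (U : Mat n) (hU : U * star U = 1)
    (d : Fin n → ℝ) (c1 c2 : ℝ) :
    U * Matrix.diagonal (fun i => c1 * d i + c2) * star U =
      c1 • (U * Matrix.diagonal d * star U) + c2 • (1 : Mat n) := by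
  have hd : Matrix.diagonal (fun i => c1 * d i + c2) =
      c1 • Matrix.diagonal d + c2 • (1 : Mat n) := by
    ext i j
    rcases eq_or_ne i j with rfl | hij
    · simp
    · simp [Matrix.diagonal_apply_ne _ hij, Matrix.one_apply_ne hij]
  rw [hd]
  simp [Matrix.mul_add, Matrix.add_mul, Matrix.mul_smul, Matrix.smul_mul, hU]

/-- for 2×2 SPD matrices the Riemannian and Thompson geodesics coincide. -/
theorem riemann_eq_thompson_two_by_two (X Y : Mat 2) (hX : X.PosDef) (hY : Y.PosDef)
    (t : ℝ) (ht : t ∈ Set.Icc (0 : ℝ) 1) :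
    riemann X Y t = thompson X Y t := by
  have hXs := hX.posSemidef
  have hSeq : sqrtM X = (hXs.1.eigenvectorUnitary : Mat 2) *
      Matrix.diagonal (fun i => Real.sqrt (hXs.1.eigenvalues i)) *
      (star (hXs.1.eigenvectorUnitary : Mat 2)) := dif_pos hXs
  have hSps : (sqrtM X).PosSemidef := by
    rw [hSeq, Matrix.star_eq_conjTranspose]
    exact (Matrix.posSemidef_diagonal_iff.mpr (fun i => Real.sqrt_nonneg _)).mul_mul_conjTranspose_same _
  have hSH : (sqrtM X).IsHermitian := hSps.isHermitian
  have hSS : sqrtM X * sqrtM X = X := by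
    rw [hSeq]
    have hU2 : star (hXs.1.eigenvectorUnitary : Mat 2) * (hXs.1.eigenvectorUnitary : Mat 2) = 1 :=
      Matrix.mem_unitaryGroup_iff'.mp hXs.1.eigenvectorUnitary.2
    have hsp := hXs.1.spectral_theorem
    rw [Unitary.conjStarAlgAut_apply] at hsp
    conv_rhs => rw [hsp]
    simp only [mul_assoc]
    rw [← mul_assoc (star _) (_ : Mat 2), hU2, one_mul, ← mul_assoc (Matrix.diagonal _),
      Matrix.diagonal_mul_diagonal]
    congr 3
    funext i
    simp [Real.mul_self_sqrt (hXs.eigenvalues_nonneg i)]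
  have hdet : IsUnit (sqrtM X).det := by
    have h1 : (sqrtM X).det * (sqrtM X).det = X.det := by rw [← Matrix.det_mul, hSS]
    have hx : X.det ≠ 0 := hX.det_pos.ne'
    exact isUnit_iff_ne_zero.mpr fun h => hx (by rw [← h1, h, mul_zero])
  have hSinv : sqrtM X * (sqrtM X)⁻¹ = 1 := Matrix.mul_nonsing_inv _ hdet
  have hinvS : (sqrtM X)⁻¹ * sqrtM X = 1 := Matrix.nonsing_inv_mul _ hdet
  have hAeq : invSqrt X * Y * invSqrt X = (sqrtM X)⁻¹ * Y * (sqrtM X)⁻¹ := rfl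
  have hIH : ((sqrtM X)⁻¹).IsHermitian := hSH.inv
  have hAH : (invSqrt X * Y * invSqrt X).IsHermitian := by
    rw [hAeq]
    have h2 := Matrix.isHermitian_mul_mul_conjTranspose ((sqrtM X)⁻¹) hY.isHermitian
    rwa [hIH.eq] at h2
  have hspec : spectrum ℝ (invSqrt X * Y * invSqrt X) =
      {hAH.eigenvalues 0, hAH.eigenvalues 1} := by
    rw [hAH.spectrum_real_eq_range_eigenvalues]
    ext x
    simp only [Set.mem_range, Fin.exists_fin_two, Set.mem_insert_iff, Set.mem_singleton_iff]
    constructor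
    · rintro (h | h) <;> [left; right] <;> exact h.symm
    · rintro (h | h) <;> [left; right] <;> exact h.symm
  have hgmax : gmax X Y = max (hAH.eigenvalues 0) (hAH.eigenvalues 1) := by
    rw [gmax, lamMax, hspec, csSup_pair]
  have hgmin : gmin X Y = min (hAH.eigenvalues 0) (hAH.eigenvalues 1) := by
    rw [gmin, lamMin, hspec, csInf_pair]
  have hemem : ∀ i : Fin 2, hAH.eigenvalues i = gmin X Y ∨ hAH.eigenvalues i = gmax X Y := by
    intro i
    fin_cases i
    · rcases le_total (hAH.eigenvalues 0) (hAH.eigenvalues 1) with h | h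
      · left; rw [hgmin, min_eq_left h]; rfl
      · right; rw [hgmax, max_eq_left h]; rfl
    · rcases le_total (hAH.eigenvalues 0) (hAH.eigenvalues 1) with h | h
      · right; rw [hgmax, max_eq_right h]; rfl
      · left; rw [hgmin, min_eq_right h]; rfl
  have hUU : (hAH.eigenvectorUnitary : Mat 2) * star (hAH.eigenvectorUnitary : Mat 2) = 1 :=
    Matrix.mem_unitaryGroup_iff.mp (hAH.eigenvectorUnitary).2
  have hST : invSqrt X * Y * invSqrt X =
      (hAH.eigenvectorUnitary : Mat 2) * Matrix.diagonal hAH.eigenvalues *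
        star (hAH.eigenvectorUnitary : Mat 2) := by
    have h := hAH.spectral_theorem
    simpa only [Unitary.conjStarAlgAut_apply, RCLike.ofReal_real_eq_id, Function.id_comp] using h
  have hspd : spdPow (invSqrt X * Y * invSqrt X) t =
      (hAH.eigenvectorUnitary : Mat 2) *
        Matrix.diagonal (fun i => hAH.eigenvalues i ^ t) *
        star (hAH.eigenvectorUnitary : Mat 2) := by
    rw [spdPow, dif_pos hAH]
  have hSAS : sqrtM X * (invSqrt X * Y * invSqrt X) * sqrtM X = Y := by
    rw [hAeq]
    simp only [← mul_assoc]
    rw [hSinv, one_mul, mul_assoc, hinvS, mul_one]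
  by_cases hab : gmin X Y = gmax X Y
  · -- equal eigenvalues
    have heα : ∀ i : Fin 2, hAH.eigenvalues i = gmin X Y := by
      intro i
      rcases hemem i with h | h
      · exact h
      · rw [h, ← hab]
    have hdiag : Matrix.diagonal (fun i : Fin 2 => hAH.eigenvalues i ^ t) =
        (gmin X Y ^ t) • (1 : Mat 2) := by
      ext i j
      rcases eq_or_ne i j with rfl | hij
      · simp [heα i]
      · simp [Matrix.diagonal_apply_ne _ hij, Matrix.one_apply_ne hij]
    rw [riemann, hspd, hdiag, thompson, if_pos hab]
    simp only [Matrix.mul_smul, Matrix.smul_mul, Matrix.mul_one, hUU, hSS]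
  · -- distinct eigenvalues
    have hba : gmax X Y - gmin X Y ≠ 0 := sub_ne_zero.mpr (Ne.symm hab)
    have hdiag : (fun i : Fin 2 => hAH.eigenvalues i ^ t) =
        fun i : Fin 2 => ((gmax X Y ^ t - gmin X Y ^ t) / (gmax X Y - gmin X Y)) *
          hAH.eigenvalues i +
          ((gmax X Y * gmin X Y ^ t - gmin X Y * gmax X Y ^ t) / (gmax X Y - gmin X Y)) := by
      funext i
      rcases hemem i with h | h <;> rw [h] <;> field_simp <;> ring
    rw [riemann, hspd, hdiag,
      unitary_conj_diag_affine _ hUU hAH.eigenvalues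
        ((gmax X Y ^ t - gmin X Y ^ t) / (gmax X Y - gmin X Y))
        ((gmax X Y * gmin X Y ^ t - gmin X Y * gmax X Y ^ t) / (gmax X Y - gmin X Y)),
      ← hST, thompson, if_neg hab]
    simp only [Matrix.mul_add, Matrix.add_mul, Matrix.mul_smul, Matrix.smul_mul,
      Matrix.mul_one, hSAS, hSS]
end
end

section
/- Let X and Y be n×n real symmetric positive definite matrices. Then for all s, t ∈ [0,1], (X *_s Y) *_t Y = X *_{s+t−st} Y. -/
open Matrix Filter Topology
open scoped Classical

noncomputable section

namespace ThompsonAux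

open Matrix

variable {n : ℕ}

lemma posDef_conj {A B : Mat n} (hA : A.PosDef) (hB : IsUnit B) :
    (Bᴴ * A * B).PosDef := by
  exact hA.conjTranspose_mul_mul_same (mulVec_injective_iff_isUnit.mpr hB)

lemma sqrtM_mul_self {X : Mat n} (hX : X.PosDef) : sqrtM X * sqrtM X = X := by
  rw [sqrtM, dif_pos hX.posSemidef]
  have h2 : star (hX.posSemidef.1.eigenvectorUnitary : Mat n) *
      (hX.posSemidef.1.eigenvectorUnitary : Mat n) = 1 :=
    Matrix.mem_unitaryGroup_iff'.mp hX.posSemidef.1.eigenvectorUnitary.2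
  have hspec := hX.posSemidef.1.spectral_theorem
  rw [Unitary.conjStarAlgAut_apply, RCLike.ofReal_real_eq_id, Function.id_comp] at hspec
  have e : ∀ U D : Mat n, star U * U = 1 →
      U * D * star U * (U * D * star U) = U * (D * D) * star U := by
    intro U D hU
    rw [show U * D * star U * (U * D * star U) = U * D * (star U * U) * D * star U by
      simp only [mul_assoc]]
    rw [hU, mul_one]; simp only [mul_assoc]
  rw [e _ _ h2, Matrix.diagonal_mul_diagonal]
  conv_rhs => rw [hspec]
  congr 3
  funext i
  exact Real.mul_self_sqrt (hX.eigenvalues_pos i).le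

lemma sqrtM_herm {X : Mat n} (hX : X.PosDef) : (sqrtM X).IsHermitian := by
  rw [sqrtM, dif_pos hX.posSemidef]
  exact isHermitian_mul_mul_conjTranspose _ (isHermitian_diagonal _)

lemma sqrtM_isUnit {X : Mat n} (hX : X.PosDef) : IsUnit (sqrtM X) := by
  rw [Matrix.isUnit_iff_isUnit_det, isUnit_iff_ne_zero]
  intro h0
  have h : (sqrtM X).det * (sqrtM X).det = X.det := by
    rw [← Matrix.det_mul, sqrtM_mul_self hX]
  rw [h0, mul_zero] at h
  exact absurd h.symm (ne_of_gt hX.det_pos)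

lemma invSqrt_isUnit {X : Mat n} (hX : X.PosDef) : IsUnit (invSqrt X) := by
  rw [invSqrt, Matrix.isUnit_iff_isUnit_det, Matrix.det_nonsing_inv,
    Ring.inverse_eq_inv', isUnit_iff_ne_zero]
  have h := (Matrix.isUnit_iff_isUnit_det _).mp (sqrtM_isUnit hX)
  rw [isUnit_iff_ne_zero] at h
  exact inv_ne_zero h

lemma spectrum_conj {M A : Mat n} (hM : IsUnit M) :
    spectrum ℝ (M * A * M⁻¹) = spectrum ℝ A := by
  have h : M * A * M⁻¹ = (hM.unit : Mat n) * A * ((hM.unit⁻¹ : (Mat n)ˣ) : Mat n) := by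
    rw [Matrix.coe_units_inv, hM.unit_spec]
  rw [h, spectrum.units_conjugate]

lemma posDef_S {X Y : Mat n} (hX : X.PosDef) (hY : Y.PosDef) :
    (invSqrt X * Y * invSqrt X).PosDef := by
  have h : invSqrt X * Y * invSqrt X = (invSqrt X)ᴴ * Y * invSqrt X := by
    rw [invSqrt, Matrix.conjTranspose_nonsing_inv, (sqrtM_herm hX).eq]
  rw [h]
  exact posDef_conj hY (invSqrt_isUnit hX)

lemma spectrum_core {X Y : Mat n} (hX : X.PosDef) (hY : Y.PosDef) (φ ψ : ℝ)
    (hpos : ∀ x ∈ spectrum ℝ (invSqrt X * Y * invSqrt X), 0 < φ * x + ψ) :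
    (φ • Y + ψ • X).PosDef ∧
      spectrum ℝ (invSqrt (φ • Y + ψ • X) * Y * invSqrt (φ • Y + ψ • X)) =
        (fun x => x / (φ * x + ψ)) '' spectrum ℝ (invSqrt X * Y * invSqrt X) := by
  classical
  set Q := sqrtM X with hQdef
  have hQQ : Q * Q = X := sqrtM_mul_self hX
  have hQu : IsUnit Q := sqrtM_isUnit hX
  have hQd : IsUnit Q.det := (Matrix.isUnit_iff_isUnit_det _).mp hQu
  have hQh : Qᴴ = Q := (sqrtM_herm hX).eq
  set S := invSqrt X * Y * invSqrt X with hSdef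
  have hSpd : S.PosDef := posDef_S hX hY
  have hSh : S.IsHermitian := hSpd.1
  set μ := hSh.eigenvalues with hμdef
  set V := (hSh.eigenvectorUnitary : Mat n) with hVdef
  have hV1 : V * star V = 1 := Matrix.mem_unitaryGroup_iff.mp hSh.eigenvectorUnitary.2
  have hV2 : star V * V = 1 := Matrix.mem_unitaryGroup_iff'.mp hSh.eigenvectorUnitary.2
  have hVu : IsUnit V := ⟨⟨V, star V, hV1, hV2⟩, rfl⟩
  have hSVD : S = V * Matrix.diagonal μ * star V := by
    have h := hSh.spectral_theorem
    rwa [RCLike.ofReal_real_eq_id, Function.id_comp] at h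
  set E := Matrix.diagonal (fun i => φ * μ i + ψ) with hEdef
  have hEpd : E.PosDef := Matrix.posDef_diagonal_iff.mpr
    (fun i => hpos _ (hSh.eigenvalues_mem_spectrum_real i))
  have hEeq : E = φ • Matrix.diagonal μ + ψ • (1 : Mat n) := by
    rw [hEdef]
    have h : (fun i => φ * μ i + ψ) = fun i => (φ • μ) i + (ψ • (fun _ => (1:ℝ))) i := by
      funext i; simp
    rw [h, ← Matrix.diagonal_add, Matrix.diagonal_smul, Matrix.diagonal_smul,
      Matrix.diagonal_one]
  have hY' : Q * S * Q = Y := by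
    rw [hSdef, invSqrt, ← hQdef]
    have h : Q * (Q⁻¹ * Y * Q⁻¹) * Q = (Q * Q⁻¹) * Y * (Q⁻¹ * Q) := by
      simp only [mul_assoc]
    rw [h, Matrix.mul_nonsing_inv _ hQd, Matrix.nonsing_inv_mul _ hQd, one_mul, mul_one]
  have hVEV : V * E * star V = φ • S + ψ • (1 : Mat n) := by
    rw [hEeq, hSVD]
    simp only [Matrix.mul_add, Matrix.add_mul, mul_smul_comm, smul_mul_assoc, mul_one, hV1,
      mul_assoc]
  have hZeq : φ • Y + ψ • X = Q * (V * E * star V) * Q := by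
    rw [hVEV, ← hY', ← hQQ]
    simp only [Matrix.mul_add, Matrix.add_mul, mul_smul_comm, smul_mul_assoc, mul_one, one_mul,
      mul_assoc]
  have hZpd : (φ • Y + ψ • X).PosDef := by
    rw [hZeq]
    have h1 : IsUnit (star V) := ⟨⟨star V, V, hV2, hV1⟩, rfl⟩
    have hconj1 : (V * E * star V).PosDef := by
      have h : V * E * star V = (star V)ᴴ * E * (star V) := by
        rw [Matrix.star_eq_conjTranspose, Matrix.conjTranspose_conjTranspose]
      rw [h]; exact posDef_conj hEpd h1
    have h2 : Q * (V * E * star V) * Q = Qᴴ * (V * E * star V) * Q := by rw [hQh]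
    rw [h2]; exact posDef_conj hconj1 hQu
  refine ⟨hZpd, ?_⟩
  set Z := φ • Y + ψ • X with hZdef
  set W := invSqrt Z with hWdef
  have hWu : IsUnit W := invSqrt_isUnit hZpd
  have hWd : IsUnit W.det := (Matrix.isUnit_iff_isUnit_det _).mp hWu
  have hWW : W * W = Z⁻¹ := by
    rw [hWdef, invSqrt, ← Matrix.mul_inv_rev, sqrtM_mul_self hZpd]
  have step1 : W * Y * W = W * (Y * Z⁻¹) * W⁻¹ := by
    rw [← hWW]
    have h : W * (Y * (W * W)) * W⁻¹ = W * Y * (W * (W * W⁻¹)) := by simp only [mul_assoc]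
    rw [h, Matrix.mul_nonsing_inv _ hWd, mul_one]
  have hVinv : V⁻¹ = star V := Matrix.inv_eq_left_inv hV2
  have hsVinv : (star V)⁻¹ = V := Matrix.inv_eq_left_inv hV1
  have hc1 : ∀ M : Mat n, Q * (Q⁻¹ * M) = M := fun M => by
    rw [← mul_assoc, Matrix.mul_nonsing_inv _ hQd, one_mul]
  have hc3 : ∀ M : Mat n, star V * (V * M) = M := fun M => by
    rw [← mul_assoc, hV2, one_mul]
  have key : Y * Z⁻¹ = (Q * V) * (Matrix.diagonal μ * E⁻¹) * (Q * V)⁻¹ := by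
    rw [← hY', hSVD, hZeq]
    simp only [Matrix.mul_inv_rev, hVinv, hsVinv]
    simp only [mul_assoc, hc1, hc3]
  have hEinv : E⁻¹ = Matrix.diagonal (fun i => (φ * μ i + ψ)⁻¹) := by
    apply Matrix.inv_eq_right_inv
    have hfun : (fun i => (φ * μ i + ψ) * (φ * μ i + ψ)⁻¹) = fun _ => (1:ℝ) := by
      funext i
      exact mul_inv_cancel₀ (hpos _ (hSh.eigenvalues_mem_spectrum_real i)).ne'
    rw [hEdef, Matrix.diagonal_mul_diagonal, hfun, Matrix.diagonal_one]
  have hDE : Matrix.diagonal μ * E⁻¹ = Matrix.diagonal (fun i => μ i / (φ * μ i + ψ)) := by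
    rw [hEinv, Matrix.diagonal_mul_diagonal]
    have hfun : (fun i => μ i * (φ * μ i + ψ)⁻¹) = fun i => μ i / (φ * μ i + ψ) := by
      funext i
      rw [div_eq_mul_inv]
    rw [hfun]
  calc spectrum ℝ (W * Y * W)
      = spectrum ℝ (W * (Y * Z⁻¹) * W⁻¹) := by rw [step1]
    _ = spectrum ℝ (Y * Z⁻¹) := spectrum_conj hWu
    _ = spectrum ℝ ((Q * V) * (Matrix.diagonal μ * E⁻¹) * (Q * V)⁻¹) := by rw [key]
    _ = spectrum ℝ (Matrix.diagonal μ * E⁻¹) := spectrum_conj (hQu.mul hVu)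
    _ = spectrum ℝ (Matrix.diagonal (fun i => μ i / (φ * μ i + ψ))) := by rw [hDE]
    _ = Set.range (fun i => μ i / (φ * μ i + ψ)) := spectrum_diagonal _
    _ = (fun x => x / (φ * x + ψ)) '' Set.range μ := by
        rw [← Set.range_comp]; rfl
    _ = (fun x => x / (φ * x + ψ)) '' spectrum ℝ S := by
        rw [hSh.spectrum_real_eq_range_eigenvalues]

lemma spec_facts (hn : 0 < n) {X Y : Mat n} (hX : X.PosDef) (hY : Y.PosDef) :
    (spectrum ℝ (invSqrt X * Y * invSqrt X)).Finite ∧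
      (spectrum ℝ (invSqrt X * Y * invSqrt X)).Nonempty ∧
      (∀ x ∈ spectrum ℝ (invSqrt X * Y * invSqrt X), 0 < x) := by
  classical
  have hSpd := posDef_S hX hY
  haveI : Nonempty (Fin n) := Fin.pos_iff_nonempty.mp hn
  rw [hSpd.1.spectrum_real_eq_range_eigenvalues]
  refine ⟨Set.finite_range _, Set.range_nonempty _, ?_⟩
  rintro x ⟨i, rfl⟩
  exact hSpd.eigenvalues_pos i

lemma gmin_facts (hn : 0 < n) {X Y : Mat n} (hX : X.PosDef) (hY : Y.PosDef) :
    0 < gmin X Y ∧ gmin X Y ≤ gmax X Y := by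
  obtain ⟨hfin, hne, hpos⟩ := spec_facts hn hX hY
  exact ⟨hpos _ (hne.csInf_mem hfin),
    csInf_le_csSup hne hfin.bddBelow hfin.bddAbove⟩

lemma gcombo (hn : 0 < n) {X Y : Mat n} (hX : X.PosDef) (hY : Y.PosDef)
    {φ ψ : ℝ} (hφ : 0 ≤ φ) (hψ : 0 ≤ ψ) (hpos : 0 < φ * gmin X Y + ψ) :
    (φ • Y + ψ • X).PosDef ∧
      gmin (φ • Y + ψ • X) Y = gmin X Y / (φ * gmin X Y + ψ) ∧
      gmax (φ • Y + ψ • X) Y = gmax X Y / (φ * gmax X Y + ψ) := by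
  obtain ⟨hfin, hne, hposall⟩ := spec_facts hn hX hY
  have hminmem : gmin X Y ∈ spectrum ℝ (invSqrt X * Y * invSqrt X) := hne.csInf_mem hfin
  have hmaxmem : gmax X Y ∈ spectrum ℝ (invSqrt X * Y * invSqrt X) := hne.csSup_mem hfin
  have hmin_le : ∀ x ∈ spectrum ℝ (invSqrt X * Y * invSqrt X),
      gmin X Y ≤ x := fun x hx => csInf_le hfin.bddBelow hx
  have hle_max : ∀ x ∈ spectrum ℝ (invSqrt X * Y * invSqrt X),
      x ≤ gmax X Y := fun x hx => le_csSup hfin.bddAbove hx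
  have hpos' : ∀ x ∈ spectrum ℝ (invSqrt X * Y * invSqrt X), 0 < φ * x + ψ := by
    intro x hx
    have h1 := hmin_le x hx
    nlinarith
  obtain ⟨hZpd, hspecZ⟩ := spectrum_core hX hY φ ψ hpos'
  refine ⟨hZpd, ?_, ?_⟩
  · have e1 : gmin (φ • Y + ψ • X) Y =
        sInf ((fun x => x / (φ * x + ψ)) '' spectrum ℝ (invSqrt X * Y * invSqrt X)) := by
      simp only [gmin, lamMin]
      rw [hspecZ]
    rw [e1]
    apply le_antisymm
    · exact csInf_le (hfin.image _).bddBelow ⟨_, hminmem, rfl⟩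
    · apply le_csInf (hne.image _)
      rintro b ⟨x, hx, rfl⟩
      have h1 := hmin_le x hx
      have h2 := hpos' _ hminmem
      have h3 := hpos' _ hx
      have h4 := hposall _ hminmem
      rw [div_le_div_iff₀ h2 h3]
      nlinarith
  · have e1 : gmax (φ • Y + ψ • X) Y =
        sSup ((fun x => x / (φ * x + ψ)) '' spectrum ℝ (invSqrt X * Y * invSqrt X)) := by
      simp only [gmax, lamMax]
      rw [hspecZ]
    rw [e1]
    apply le_antisymm
    · apply csSup_le (hne.image _)
      rintro b ⟨x, hx, rfl⟩
      have h1 := hle_max x hx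
      have h2 := hpos' _ hmaxmem
      have h3 := hpos' _ hx
      have h4 := hposall _ hx
      rw [div_le_div_iff₀ h3 h2]
      nlinarith
    · exact le_csSup (hfin.image _).bddAbove ⟨_, hmaxmem, rfl⟩

lemma coeffY {α β : ℝ} (s t : ℝ) (hα : 0 < α) (hβ : 0 < β) (hαβ : β - α ≠ 0)
    (hAB : β / β ^ s - α / α ^ s ≠ 0) :
    ((β / β ^ s) ^ t - (α / α ^ s) ^ t) / (β / β ^ s - α / α ^ s) +
      (β / β ^ s * (α / α ^ s) ^ t - α / α ^ s * (β / β ^ s) ^ t) /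
        (β / β ^ s - α / α ^ s) * ((β ^ s - α ^ s) / (β - α)) =
      (β ^ (s + t - s * t) - α ^ (s + t - s * t)) / (β - α) := by
  have ha0 : (0:ℝ) < α ^ s := Real.rpow_pos_of_pos hα s
  have hb0 : (0:ℝ) < β ^ s := Real.rpow_pos_of_pos hβ s
  have f1 : (α / α ^ s) ^ t = α ^ ((1 - s) * t) := by
    rw [show α / α ^ s = α ^ (1 - s) by rw [Real.rpow_sub hα, Real.rpow_one],
      ← Real.rpow_mul hα.le]
  have f2 : (β / β ^ s) ^ t = β ^ ((1 - s) * t) := by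
    rw [show β / β ^ s = β ^ (1 - s) by rw [Real.rpow_sub hβ, Real.rpow_one],
      ← Real.rpow_mul hβ.le]
  have e5 : α ^ (s + t - s * t) = α ^ s * α ^ ((1 - s) * t) := by
    rw [← Real.rpow_add hα]; congr 1; ring
  have e6 : β ^ (s + t - s * t) = β ^ s * β ^ ((1 - s) * t) := by
    rw [← Real.rpow_add hβ]; congr 1; ring
  rw [div_sub_div _ _ hb0.ne' ha0.ne'] at hAB ⊢
  have hnum : β * α ^ s - β ^ s * α ≠ 0 := by
    intro h0
    apply hAB
    rw [h0, zero_div]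
  rw [f1, f2, e5, e6]
  field_simp
  ring

lemma coeffX {α β : ℝ} (s t : ℝ) (hα : 0 < α) (hβ : 0 < β) (hαβ : β - α ≠ 0)
    (hAB : β / β ^ s - α / α ^ s ≠ 0) :
    (β / β ^ s * (α / α ^ s) ^ t - α / α ^ s * (β / β ^ s) ^ t) /
        (β / β ^ s - α / α ^ s) * ((β * α ^ s - α * β ^ s) / (β - α)) =
      (β * α ^ (s + t - s * t) - α * β ^ (s + t - s * t)) / (β - α) := by
  have ha0 : (0:ℝ) < α ^ s := Real.rpow_pos_of_pos hα s
  have hb0 : (0:ℝ) < β ^ s := Real.rpow_pos_of_pos hβ s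
  have f1 : (α / α ^ s) ^ t = α ^ ((1 - s) * t) := by
    rw [show α / α ^ s = α ^ (1 - s) by rw [Real.rpow_sub hα, Real.rpow_one],
      ← Real.rpow_mul hα.le]
  have f2 : (β / β ^ s) ^ t = β ^ ((1 - s) * t) := by
    rw [show β / β ^ s = β ^ (1 - s) by rw [Real.rpow_sub hβ, Real.rpow_one],
      ← Real.rpow_mul hβ.le]
  have e5 : α ^ (s + t - s * t) = α ^ s * α ^ ((1 - s) * t) := by
    rw [← Real.rpow_add hα]; congr 1; ring
  have e6 : β ^ (s + t - s * t) = β ^ s * β ^ ((1 - s) * t) := by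
    rw [← Real.rpow_add hβ]; congr 1; ring
  rw [div_sub_div _ _ hb0.ne' ha0.ne'] at hAB ⊢
  have hnum : β * α ^ s - β ^ s * α ≠ 0 := by
    intro h0
    apply hAB
    rw [h0, zero_div]
  rw [f1, f2, e5, e6]
  field_simp

lemma degY {α β : ℝ} (s t : ℝ) (hα : 0 < α) (hβ : 0 < β) (hαβ : β - α ≠ 0)
    (hAB : α / α ^ s = β / β ^ s) :
    (α / α ^ s) ^ t * ((β ^ s - α ^ s) / (β - α)) =
      (β ^ (s + t - s * t) - α ^ (s + t - s * t)) / (β - α) := by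
  have hA : α / α ^ s = α ^ (1 - s) := by rw [Real.rpow_sub hα, Real.rpow_one]
  have hB : β / β ^ s = β ^ (1 - s) := by rw [Real.rpow_sub hβ, Real.rpow_one]
  rw [hA, hB] at hAB
  have h2 : α ^ ((1 - s) * t) = β ^ ((1 - s) * t) := by
    rw [Real.rpow_mul hα.le, Real.rpow_mul hβ.le, hAB]
  have f1 : (α / α ^ s) ^ t = α ^ ((1 - s) * t) := by
    rw [hA, ← Real.rpow_mul hα.le]
  have e5 : α ^ (s + t - s * t) = α ^ s * α ^ ((1 - s) * t) := by
    rw [← Real.rpow_add hα]; congr 1; ring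
  have e6 : β ^ (s + t - s * t) = β ^ s * β ^ ((1 - s) * t) := by
    rw [← Real.rpow_add hβ]; congr 1; ring
  rw [f1, e5, e6, ← h2]
  field_simp

lemma degX {α β : ℝ} (s t : ℝ) (hα : 0 < α) (hβ : 0 < β) (hαβ : β - α ≠ 0)
    (hAB : α / α ^ s = β / β ^ s) :
    (α / α ^ s) ^ t * ((β * α ^ s - α * β ^ s) / (β - α)) =
      (β * α ^ (s + t - s * t) - α * β ^ (s + t - s * t)) / (β - α) := by
  have hA : α / α ^ s = α ^ (1 - s) := by rw [Real.rpow_sub hα, Real.rpow_one]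
  have hB : β / β ^ s = β ^ (1 - s) := by rw [Real.rpow_sub hβ, Real.rpow_one]
  rw [hA, hB] at hAB
  have h2 : α ^ ((1 - s) * t) = β ^ ((1 - s) * t) := by
    rw [Real.rpow_mul hα.le, Real.rpow_mul hβ.le, hAB]
  have f1 : (α / α ^ s) ^ t = α ^ ((1 - s) * t) := by
    rw [hA, ← Real.rpow_mul hα.le]
  have e5 : α ^ (s + t - s * t) = α ^ s * α ^ ((1 - s) * t) := by
    rw [← Real.rpow_add hα]; congr 1; ring
  have e6 : β ^ (s + t - s * t) = β ^ s * β ^ ((1 - s) * t) := by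
    rw [← Real.rpow_add hβ]; congr 1; ring
  rw [f1, e5, e6, ← h2]
  field_simp

end ThompsonAux

/-- geodesic consistency `(X *_s Y) *_t Y = X *_{s+t-st} Y`. -/
theorem thompson_consistency_right {n : ℕ} (X Y : Mat n) (hX : X.PosDef) (hY : Y.PosDef)
    (s t : ℝ) (hs : s ∈ Set.Icc (0 : ℝ) 1) (ht : t ∈ Set.Icc (0 : ℝ) 1) :
    thompson (thompson X Y s) Y t = thompson X Y (s + t - s * t) := by
  obtain ⟨hs0, hs1⟩ := hs
  obtain ⟨ht0, ht1⟩ := ht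
  rcases Nat.eq_zero_or_pos n with hn | hn
  · subst hn; exact Subsingleton.elim _ _
  obtain ⟨hα0, hαβ⟩ := ThompsonAux.gmin_facts hn hX hY
  have hβ0 : 0 < gmax X Y := lt_of_lt_of_le hα0 hαβ
  have ha0 : 0 < gmin X Y ^ s := Real.rpow_pos_of_pos hα0 s
  have hb0 : 0 < gmax X Y ^ s := Real.rpow_pos_of_pos hβ0 s
  by_cases hcase : gmin X Y = gmax X Y
  · -- degenerate case: gmin X Y = gmax X Y
    have hz : thompson X Y s = (0:ℝ) • Y + (gmin X Y ^ s) • X := by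
      simp only [thompson]
      rw [if_pos hcase, zero_smul, zero_add]
    have hpos : 0 < (0:ℝ) * gmin X Y + gmin X Y ^ s := by
      rw [zero_mul, zero_add]; exact ha0
    obtain ⟨hZpd, hgm, hgM⟩ := ThompsonAux.gcombo hn hX hY le_rfl ha0.le hpos
    have heq : gmin ((0:ℝ) • Y + (gmin X Y ^ s) • X) Y
        = gmax ((0:ℝ) • Y + (gmin X Y ^ s) • X) Y := by
      rw [hgm, hgM, ← hcase]
    rw [hz]
    simp only [thompson]
    rw [if_pos heq, if_pos hcase, hgm, zero_smul, zero_add, smul_smul]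
    congr 1
    rw [zero_mul, zero_add,
      show gmin X Y / gmin X Y ^ s = gmin X Y ^ (1 - s) by
        rw [Real.rpow_sub hα0, Real.rpow_one],
      ← Real.rpow_mul hα0.le, ← Real.rpow_add hα0]
    congr 1
    ring
  · -- main case: gmin X Y < gmax X Y
    have hαβlt : gmin X Y < gmax X Y := lt_of_le_of_ne hαβ hcase
    have hba : (0:ℝ) < gmax X Y - gmin X Y := sub_pos.mpr hαβlt
    have hφ0 : 0 ≤ (gmax X Y ^ s - gmin X Y ^ s) / (gmax X Y - gmin X Y) :=
      div_nonneg (sub_nonneg.mpr (Real.rpow_le_rpow hα0.le hαβ hs0)) hba.le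
    have hψnum : gmin X Y * gmax X Y ^ s ≤ gmax X Y * gmin X Y ^ s := by
      have h1 : (gmin X Y / gmax X Y) ^ (1:ℝ) ≤ (gmin X Y / gmax X Y) ^ s :=
        Real.rpow_le_rpow_of_exponent_ge (div_pos hα0 hβ0)
          (by rw [div_le_one hβ0]; exact hαβ) hs1
      rw [Real.rpow_one, Real.div_rpow hα0.le hβ0.le, div_le_div_iff₀ hβ0 hb0] at h1
      nlinarith
    have hψ0 : 0 ≤ (gmax X Y * gmin X Y ^ s - gmin X Y * gmax X Y ^ s) /
        (gmax X Y - gmin X Y) :=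
      div_nonneg (by linarith) hba.le
    have hkeyα : (gmax X Y ^ s - gmin X Y ^ s) / (gmax X Y - gmin X Y) * gmin X Y +
        (gmax X Y * gmin X Y ^ s - gmin X Y * gmax X Y ^ s) / (gmax X Y - gmin X Y)
        = gmin X Y ^ s := by
      rw [div_mul_eq_mul_div, ← add_div, div_eq_iff hba.ne']
      ring
    have hkeyβ : (gmax X Y ^ s - gmin X Y ^ s) / (gmax X Y - gmin X Y) * gmax X Y +
        (gmax X Y * gmin X Y ^ s - gmin X Y * gmax X Y ^ s) / (gmax X Y - gmin X Y)
        = gmax X Y ^ s := by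
      rw [div_mul_eq_mul_div, ← add_div, div_eq_iff hba.ne']
      ring
    obtain ⟨hZpd, hgm, hgM⟩ :=
      ThompsonAux.gcombo hn hX hY hφ0 hψ0 (by rw [hkeyα]; exact ha0)
    rw [hkeyα] at hgm
    rw [hkeyβ] at hgM
    have hz : thompson X Y s =
        ((gmax X Y ^ s - gmin X Y ^ s) / (gmax X Y - gmin X Y)) • Y +
          ((gmax X Y * gmin X Y ^ s - gmin X Y * gmax X Y ^ s) /
            (gmax X Y - gmin X Y)) • X := by
      simp only [thompson]
      rw [if_neg hcase]
    rw [hz]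
    simp only [thompson]
    rw [hgm, hgM, if_neg hcase]
    by_cases hAB : gmin X Y / gmin X Y ^ s = gmax X Y / gmax X Y ^ s
    · rw [if_pos hAB, smul_add, smul_smul, smul_smul]
      congr 1
      · congr 1
        exact ThompsonAux.degY s t hα0 hβ0 hba.ne' hAB
      · congr 1
        exact ThompsonAux.degX s t hα0 hβ0 hba.ne' hAB
    · rw [if_neg hAB, smul_add, smul_smul, smul_smul, ← add_assoc, ← add_smul]
      congr 1
      · congr 1
        exact ThompsonAux.coeffY s t hα0 hβ0 hba.ne' (sub_ne_zero.mpr (Ne.symm hAB))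
      · congr 1
        exact ThompsonAux.coeffX s t hα0 hβ0 hba.ne' (sub_ne_zero.mpr (Ne.symm hAB))
end
end

section
/- Let Y₁, …, Y_k be n×n real symmetric positive definite matrices, let X* be a symmetric positive definite matrix satisfying the mean equation m(X*,Y₁)·Y₁ + … + m(X*,Y_k)·Y_k + (o(X*,Y₁) + … + o(X*,Y_k))·X* = 0, and let c₁, …, c_k > 0 be real scalars. Then (c₁⋯c_k)^{1/k}·X* satisfies the mean equation for the data (c₁Y₁, …, c_kY_k); that is, the inductive Thompson mean is jointly homogeneous: M(c₁Y₁, …, c_kY_k) = (c₁⋯c_k)^{1/k}·M(Y₁,…,Y_k). -/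
open Matrix Filter Topology
open scoped Classical

noncomputable section

open Pointwise in
lemma unitsSmulSet {r : ℝ} (hr : r ≠ 0) (S : Set ℝ) :
    (Units.mk0 r hr) • S = r • S := by
  ext x
  simp [Set.mem_smul_set, Units.smul_def]

section Aux
variable {n : ℕ}

lemma posSemidef_smul' {c : ℝ} (hc : 0 ≤ c) {X : Mat n} (hX : X.PosSemidef) :
    (c • X).PosSemidef := by
  exact hX.smul hc

lemma sqrtM_eq_cfc {X : Mat n} (hX : X.PosSemidef) : sqrtM X = cfc Real.sqrt X := by
  rw [sqrtM, dif_pos hX, hX.1.cfc_eq Real.sqrt, IsHermitian.cfc, Unitary.conjStarAlgAut_apply]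
  simp [Function.comp_def]

lemma sqrtM_smul' {c : ℝ} (hc : 0 < c) {X : Mat n} (hX : X.PosSemidef) :
    sqrtM (c • X) = Real.sqrt c • sqrtM X := by
  have hcX : (c • X).PosSemidef := posSemidef_smul' hc.le hX
  rw [sqrtM_eq_cfc hcX, sqrtM_eq_cfc hX]
  refine (cfc_comp_smul c Real.sqrt X (ha := hX.1)).symm.trans ?_
  refine Eq.trans ?_ (cfc_const_mul (Real.sqrt c) Real.sqrt X)
  congr 1
  funext x
  rw [smul_eq_mul, Real.sqrt_mul hc.le]

lemma sqrtM_det_isUnit {X : Mat n} (hX : X.PosDef) : IsUnit (sqrtM X).det := by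
  rw [sqrtM_eq_cfc hX.posSemidef]
  refine (Matrix.isUnit_iff_isUnit_det _).mp ((isUnit_cfc_iff Real.sqrt X (ha := hX.1)).mpr ?_)
  intro x hx
  rw [hX.1.spectrum_real_eq_range_eigenvalues] at hx
  obtain ⟨i, rfl⟩ := hx
  exact (Real.sqrt_pos.mpr (hX.eigenvalues_pos i)).ne'

lemma invSqrt_smul' {c : ℝ} (hc : 0 < c) {X : Mat n} (hX : X.PosDef) :
    invSqrt (c • X) = (Real.sqrt c)⁻¹ • invSqrt X := by
  have hs : (0:ℝ) < Real.sqrt c := Real.sqrt_pos.mpr hc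
  rw [invSqrt, invSqrt, sqrtM_smul' hc hX.posSemidef]
  refine Matrix.inv_eq_left_inv ?_
  rw [Matrix.smul_mul, Matrix.mul_smul, smul_smul, inv_mul_cancel₀ hs.ne',
    one_smul, Matrix.nonsing_inv_mul _ (sqrtM_det_isUnit hX)]

open Pointwise in
lemma lamMax_smul' {r : ℝ} (hr : 0 < r) (A : Mat n) : lamMax (r • A) = r * lamMax A := by
  have h := spectrum.unit_smul_eq_smul (R := ℝ) A (Units.mk0 r hr.ne')
  rw [Units.smul_def, Units.val_mk0, unitsSmulSet] at h
  rw [lamMax, lamMax, h, Real.sSup_smul_of_nonneg hr.le, smul_eq_mul]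

open Pointwise in
lemma lamMin_smul' {r : ℝ} (hr : 0 < r) (A : Mat n) : lamMin (r • A) = r * lamMin A := by
  have h := spectrum.unit_smul_eq_smul (R := ℝ) A (Units.mk0 r hr.ne')
  rw [Units.smul_def, Units.val_mk0, unitsSmulSet] at h
  rw [lamMin, lamMin, h, Real.sInf_smul_of_nonneg hr.le, smul_eq_mul]

lemma conj_smul' {c d : ℝ} (hc : 0 < c) (hd : 0 < d) {X : Mat n} (hX : X.PosDef)
    (Y : Mat n) : invSqrt (c • X) * (d • Y) * invSqrt (c • X) =
      (d / c) • (invSqrt X * Y * invSqrt X) := by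
  have hs : (0:ℝ) < Real.sqrt c := Real.sqrt_pos.mpr hc
  rw [invSqrt_smul' hc hX]
  simp only [Matrix.smul_mul, Matrix.mul_smul, smul_smul]
  congr 1
  have hcc : (Real.sqrt c)⁻¹ * (Real.sqrt c)⁻¹ = c⁻¹ := by
    rw [← mul_inv, Real.mul_self_sqrt hc.le]
  rw [div_eq_mul_inv, ← hcc]
  ring

lemma gmax_smul' {c d : ℝ} (hc : 0 < c) (hd : 0 < d) {X : Mat n} (hX : X.PosDef)
    (Y : Mat n) : gmax (c • X) (d • Y) = (d / c) * gmax X Y := by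
  rw [gmax, gmax, conj_smul' hc hd hX, lamMax_smul' (div_pos hd hc)]

lemma gmin_smul' {c d : ℝ} (hc : 0 < c) (hd : 0 < d) {X : Mat n} (hX : X.PosDef)
    (Y : Mat n) : gmin (c • X) (d • Y) = (d / c) * gmin X Y := by
  rw [gmin, gmin, conj_smul' hc hd hX, lamMin_smul' (div_pos hd hc)]

lemma posDef_conj' {Y B : Mat n} (hY : Y.PosDef) (hB : IsUnit B.det) :
    (Bᴴ * Y * B).PosDef := by
  exact hY.conjTranspose_mul_mul_same
    (Matrix.mulVec_injective_iff_isUnit.mpr ((Matrix.isUnit_iff_isUnit_det B).mpr hB))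

lemma invSqrt_isHermitian {X : Mat n} (hX : X.PosDef) : (invSqrt X)ᴴ = invSqrt X := by
  have h : (cfc Real.sqrt X)ᴴ = cfc Real.sqrt X := cfc_predicate (R := ℝ) Real.sqrt X
  rw [invSqrt, sqrtM_eq_cfc hX.posSemidef, Matrix.conjTranspose_nonsing_inv, h]

lemma invSqrt_det_isUnit {X : Mat n} (hX : X.PosDef) : IsUnit (invSqrt X).det := by
  rw [invSqrt]
  exact Matrix.isUnit_nonsing_inv_det _ (sqrtM_det_isUnit hX)

lemma posDef_conj_invSqrt {X Y : Mat n} (hX : X.PosDef) (hY : Y.PosDef) :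
    (invSqrt X * Y * invSqrt X).PosDef := by
  have h := posDef_conj' hY (invSqrt_det_isUnit hX)
  rwa [invSqrt_isHermitian hX] at h

lemma gmin_pos' (hn : 0 < n) {X Y : Mat n} (hX : X.PosDef) (hY : Y.PosDef) :
    0 < gmin X Y := by
  have hP := posDef_conj_invSqrt hX hY
  have hs : spectrum ℝ (invSqrt X * Y * invSqrt X) = Set.range hP.1.eigenvalues :=
    Matrix.IsHermitian.spectrum_real_eq_range_eigenvalues hP.1
  rw [gmin, lamMin, hs]
  haveI : Nonempty (Fin n) := ⟨⟨0, hn⟩⟩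
  obtain ⟨i, hi⟩ := (Set.range_nonempty hP.1.eigenvalues).csInf_mem
    (Set.finite_range _)
  rw [← hi]
  exact hP.eigenvalues_pos i

lemma gmax_pos' (hn : 0 < n) {X Y : Mat n} (hX : X.PosDef) (hY : Y.PosDef) :
    0 < gmax X Y := by
  have hP := posDef_conj_invSqrt hX hY
  have hs : spectrum ℝ (invSqrt X * Y * invSqrt X) = Set.range hP.1.eigenvalues :=
    Matrix.IsHermitian.spectrum_real_eq_range_eigenvalues hP.1
  rw [gmax, lamMax, hs]
  haveI : Nonempty (Fin n) := ⟨⟨0, hn⟩⟩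
  obtain ⟨i, hi⟩ := (Set.range_nonempty hP.1.eigenvalues).csSup_mem
    (Set.finite_range _)
  rw [← hi]
  exact hP.eigenvalues_pos i

end Aux

lemma m_scale {a b r : ℝ} (ha : 0 < a) (hb : 0 < b) (hr : 0 < r) :
    (if r * b = r * a then 1 / (r * a)
      else (Real.log (r * b) - Real.log (r * a)) / (r * b - r * a))
    = (if b = a then 1 / a else (Real.log b - Real.log a) / (b - a)) / r := by
  by_cases h : b = a
  · subst h
    rw [if_pos rfl, if_pos rfl, div_div, one_div, one_div, mul_comm]
  · have h2 : r * b ≠ r * a := fun hh => h (mul_left_cancel₀ hr.ne' hh)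
    rw [if_neg h2, if_neg h, Real.log_mul hr.ne' hb.ne', Real.log_mul hr.ne' ha.ne',
      show Real.log r + Real.log b - (Real.log r + Real.log a) =
        Real.log b - Real.log a from by ring,
      show r * b - r * a = (b - a) * r from by ring, ← div_div]

lemma o_scale {a b r : ℝ} (ha : 0 < a) (hb : 0 < b) (hr : 0 < r) :
    (if r * b = r * a then Real.log (r * a) - 1
      else (r * b * Real.log (r * a) - r * a * Real.log (r * b)) / (r * b - r * a))
    = (if b = a then Real.log a - 1
        else (b * Real.log a - a * Real.log b) / (b - a)) + Real.log r := by
  by_cases h : b = a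
  · subst h
    rw [if_pos rfl, if_pos rfl, Real.log_mul hr.ne' ha.ne']
    ring
  · have h2 : r * b ≠ r * a := fun hh => h (mul_left_cancel₀ hr.ne' hh)
    have hba : b - a ≠ 0 := sub_ne_zero.mpr h
    rw [if_neg h2, if_neg h, Real.log_mul hr.ne' hb.ne', Real.log_mul hr.ne' ha.ne',
      show r * b * (Real.log r + Real.log a) - r * a * (Real.log r + Real.log b) =
        r * ((b * Real.log a - a * Real.log b) + Real.log r * (b - a)) from by ring,
      show r * b - r * a = r * (b - a) from by ring,
      mul_div_mul_left _ _ hr.ne', add_div, mul_div_assoc, div_self hba, mul_one]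

/-- joint homogeneity of the inductive Thompson mean: if `X*` solves the
mean equation for `(Y₁,…,Y_k)` and `c₁,…,c_k > 0`, then `(c₁⋯c_k)^{1/k}·X*` solves the
mean equation for `(c₁Y₁,…,c_kY_k)`. -/
theorem inductive_mean_joint_homogeneous {n k : ℕ} (hk : 0 < k) (Y : Fin k → Mat n)
    (hY : ∀ j, (Y j).PosDef) (Xs : Mat n) (hXs : Xs.PosDef) (hmean : MeanEq Y Xs)
    (c : Fin k → ℝ) (hc : ∀ j, 0 < c j) :
    MeanEq (fun j => c j • Y j) (((∏ j, c j) ^ ((1 : ℝ) / (k : ℝ))) • Xs) := by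
  by_cases hn : n = 0
  · subst hn
    unfold MeanEq
    ext i j
    exact i.elim0
  · have hn' : 0 < n := Nat.pos_of_ne_zero hn
    set γ := (∏ j, c j) ^ ((1 : ℝ) / (k : ℝ)) with hγdef
    have hprod : 0 < ∏ j, c j := Finset.prod_pos (fun j _ => hc j)
    have hγ : 0 < γ := Real.rpow_pos_of_pos hprod _
    have hr : ∀ j, 0 < c j / γ := fun j => div_pos (hc j) hγ
    have hgmax : ∀ j, gmax (γ • Xs) (c j • Y j) = (c j / γ) * gmax Xs (Y j) :=
      fun j => gmax_smul' hγ (hc j) hXs (Y j)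
    have hgmin : ∀ j, gmin (γ • Xs) (c j • Y j) = (c j / γ) * gmin Xs (Y j) :=
      fun j => gmin_smul' hγ (hc j) hXs (Y j)
    have hb : ∀ j, 0 < gmax Xs (Y j) := fun j => gmax_pos' hn' hXs (hY j)
    have ha : ∀ j, 0 < gmin Xs (Y j) := fun j => gmin_pos' hn' hXs (hY j)
    have hm : ∀ j, mCoef (γ • Xs) (c j • Y j) = mCoef Xs (Y j) / (c j / γ) := by
      intro j
      rw [mCoef, mCoef, hgmax j, hgmin j]
      exact m_scale (ha j) (hb j) (hr j)
    have ho : ∀ j, oCoef (γ • Xs) (c j • Y j) = oCoef Xs (Y j) + Real.log (c j / γ) := by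
      intro j
      rw [oCoef, oCoef, hgmax j, hgmin j]
      exact o_scale (ha j) (hb j) (hr j)
    have hk' : (k : ℝ) ≠ 0 := Nat.cast_ne_zero.mpr hk.ne'
    have hlogγ : Real.log γ = (1 / (k : ℝ)) * Real.log (∏ j, c j) :=
      Real.log_rpow hprod _
    have hlogsum : ∑ j, Real.log (c j / γ) = 0 := by
      have hd : ∀ j, Real.log (c j / γ) = Real.log (c j) - Real.log γ :=
        fun j => Real.log_div (hc j).ne' hγ.ne'
      rw [Finset.sum_congr rfl (fun j _ => hd j), Finset.sum_sub_distrib,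
        Finset.sum_const, Finset.card_univ, Fintype.card_fin,
        ← Real.log_prod (fun j _ => (hc j).ne'), hlogγ, nsmul_eq_mul]
      field_simp
      ring
    have e1 : ∀ j, (mCoef Xs (Y j) / (c j / γ)) • (c j • Y j)
        = γ • (mCoef Xs (Y j) • Y j) := by
      intro j
      rw [smul_smul, smul_smul]
      congr 1
      field_simp [(hc j).ne', hγ.ne']
    unfold MeanEq at hmean ⊢
    show ∑ j, mCoef (γ • Xs) (c j • Y j) • (c j • Y j)
        + (∑ j, oCoef (γ • Xs) (c j • Y j)) • (γ • Xs) = 0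
    calc ∑ j, mCoef (γ • Xs) (c j • Y j) • (c j • Y j)
        + (∑ j, oCoef (γ • Xs) (c j • Y j)) • (γ • Xs)
        = ∑ j, γ • (mCoef Xs (Y j) • Y j) + (∑ j, oCoef Xs (Y j)) • (γ • Xs) := by
          congr 1
          · exact Finset.sum_congr rfl (fun j _ => by rw [hm j, e1 j])
          · congr 1
            rw [Finset.sum_congr rfl (fun j _ => ho j), Finset.sum_add_distrib,
              hlogsum, add_zero]
      _ = γ • (∑ j, mCoef Xs (Y j) • Y j + (∑ j, oCoef Xs (Y j)) • Xs) := by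
          rw [smul_add, Finset.smul_sum, smul_comm γ]
      _ = 0 := by rw [hmean, smul_zero]
end
end
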